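/- arXiv:2009.09340 — 2 statements merged into one kernel-verified Lean document; each statement's English description precedes it below -/
import Mathlib

section
/- Let n ≥ 2 and 1 ≤ k < n with e = gcd(k, n), and suppose n/e is odd. Let c ∈ F_{2^e} \ {0, 1}. With the sets F and F' defined as follows — for (α, β) ∈ F_q × F_q write A = α + β, B = β^{2^{n−k}} + β, A' = c·α + c^{−1}·β, B' = (c^{−1}β)^{2^{n−k}} + c^{−1}β, let γ, γ' be the unique elements with γ^{2^k+1} = A and (γ')^{2^k+1} = A', and set F = {(α,β) : A ≠ 0, B ≠ 0, Tr_e(B·γ^{−1}) = 1} and F' = {(α,β) : A' ≠ 0, B' ≠ 0, Tr_e(B'·(γ')^{−1}) = 1} — for every b ∈ F_q^*, the number N of pairs (x, y) ∈ F_q × F_q with x^{2^k+1} + c·y^{2^k+1} = b and (x+1)^{2^k+1} + c^{−1}·(y+1)^{2^k+1} = b satisfies 2^n·N ≤ 2^n + 2^e·|F ∩ F'|. -/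
set_option linter.unusedSectionVars false
set_option linter.unusedVariables false
set_option linter.unusedTactic false


open Finset

/-- If `d` divides `2^a - 1` and `2^b - 1` then it divides `2^(gcd a b) - 1`. -/
lemma dvd_pow_gcd_sub_one {d a b : ℕ} (ha : d ∣ 2 ^ a - 1) (hb : d ∣ 2 ^ b - 1) :
    d ∣ 2 ^ Nat.gcd a b - 1 := by
  have key : ∀ m : ℕ, d ∣ 2 ^ m - 1 ↔ (2 : ZMod d) ^ m = 1 := by
    intro m
    have h1 : (1 : ℕ) ≤ 2 ^ m := Nat.one_le_two_pow
    constructor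
    · intro h
      have : ((2 ^ m - 1 : ℕ) : ZMod d) = 0 := (ZMod.natCast_eq_zero_iff _ _).2 h
      have h2 : ((2 ^ m - 1 : ℕ) : ZMod d) = (2 : ZMod d) ^ m - 1 := by
        push_cast [Nat.cast_sub h1]
        ring
      rw [h2] at this
      linear_combination this
    · intro h
      have h2 : ((2 ^ m - 1 : ℕ) : ZMod d) = (2 : ZMod d) ^ m - 1 := by
        push_cast [Nat.cast_sub h1]
        ring
      rw [← ZMod.natCast_eq_zero_iff, h2, h, sub_self]
  rw [key] at ha hb ⊢
  have hoa : orderOf (2 : ZMod d) ∣ a := orderOf_dvd_iff_pow_eq_one.2 ha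
  have hob : orderOf (2 : ZMod d) ∣ b := orderOf_dvd_iff_pow_eq_one.2 hb
  exact orderOf_dvd_iff_pow_eq_one.1 (Nat.dvd_gcd hoa hob)

lemma gcd_two_mul (k n e : ℕ) (he : e = Nat.gcd k n) (hodd : Odd (n / e)) (hk : 1 ≤ k)
    (hn : 1 ≤ n) : Nat.gcd (2 * k) n = e := by
  have he1 : 1 ≤ e := by
    rw [he]; exact Nat.le_of_lt_succ (by
      have := Nat.gcd_pos_of_pos_left (n := n) (Nat.lt_of_lt_of_le Nat.zero_lt_one hk)
      omega)
  have hen : e ∣ n := he ▸ Nat.gcd_dvd_right k n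
  have hek : e ∣ k := he ▸ Nat.gcd_dvd_left k n
  have h1 : e ∣ Nat.gcd (2 * k) n := Nat.dvd_gcd (Dvd.dvd.mul_left hek 2) hen
  have h2 : Nat.gcd (2 * k) n ∣ 2 * e := by
    have : Nat.gcd (2 * k) n ∣ Nat.gcd (2 * k) (2 * n) :=
      Nat.dvd_gcd (Nat.gcd_dvd_left _ _) ((Nat.gcd_dvd_right _ _).mul_left 2)
    rwa [Nat.gcd_mul_left, ← he] at this
  rcases h1 with ⟨m, hm⟩
  have hm2 : m ∣ 2 := by
    have h2' : e * m ∣ e * 2 := by rw [← hm]; rwa [mul_comm 2 e] at h2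
    exact (mul_dvd_mul_iff_left (by omega : e ≠ 0)).1 h2'
  have : m = 1 ∨ m = 2 := (Nat.dvd_prime Nat.prime_two).1 hm2
  rcases this with h | h
  · rw [hm, h, mul_one]
  · exfalso
    have h2en : e * 2 ∣ n := by rw [← h, ← hm]; exact Nat.gcd_dvd_right (2 * k) n
    rcases h2en with ⟨j, hj⟩
    have : n / e = 2 * j := by
      rw [hj, mul_assoc, Nat.mul_div_cancel_left _ (by omega : 0 < e)]
    rw [this] at hodd
    exact (Nat.not_odd_iff_even.2 ⟨j, by ring⟩) hodd

lemma coprime_gold (k n e : ℕ) (he : e = Nat.gcd k n) (hodd : Odd (n / e)) (hk : 1 ≤ k)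
    (hkn : k < n) : Nat.Coprime (2 ^ k + 1) (2 ^ n - 1) := by
  have hn : 1 ≤ n := by omega
  have hge : Nat.gcd (2 * k) n = e := gcd_two_mul k n e he hodd hk hn
  have hek : e ∣ k := he ▸ Nat.gcd_dvd_left k n
  set d := Nat.gcd (2 ^ k + 1) (2 ^ n - 1) with hd
  have hd1 : d ∣ 2 ^ k + 1 := Nat.gcd_dvd_left _ _
  have hd2 : d ∣ 2 ^ n - 1 := Nat.gcd_dvd_right _ _
  have hdvd2k : d ∣ 2 ^ (2 * k) - 1 := by
    have : (2 ^ k + 1) ∣ 2 ^ (2 * k) - 1 := by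
      have h1 : 1 ≤ 2 ^ k := Nat.one_le_two_pow
      cases' Nat.exists_eq_add_of_le h1 with t ht
      have h : 2 ^ (2 * k) - 1 = (2 ^ k + 1) * (2 ^ k - 1) := by
        have h2 : 2 ^ (2 * k) = 2 ^ k * 2 ^ k := by rw [two_mul, pow_add]
        rw [h2, ht]
        have : (1 + t) * (1 + t) = (1 + t + 1) * t + 1 := by ring
        rw [this]
        simp
      exact ⟨2 ^ k - 1, h⟩
    exact hd1.trans this
  have hde : d ∣ 2 ^ e - 1 := by
    have := dvd_pow_gcd_sub_one hdvd2k hd2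
    rwa [hge] at this
  have hdk : d ∣ 2 ^ k - 1 := by
    refine hde.trans ?_
    rcases hek with ⟨m, hm⟩
    have : 2 ^ k - 1 = (2 ^ e) ^ m - 1 ^ m := by rw [← pow_mul, ← hm, one_pow]
    rw [this]
    exact Nat.sub_dvd_pow_sub_pow _ _ _
  -- d divides both 2^k+1 and 2^k-1 hence divides 2; d is odd
  have hdodd : ¬ 2 ∣ d := by
    intro h2
    have hx : (2 : ℕ) ∣ 2 ^ n - 1 := h2.trans hd2
    have hy : (2 : ℕ) ∣ 2 ^ n := dvd_pow_self 2 (by omega : n ≠ 0)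
    have h1 : 1 ≤ 2 ^ n := Nat.one_le_two_pow
    have := Nat.dvd_sub hy hx
    rw [(by omega : 2 ^ n - (2 ^ n - 1) = 1)] at this
    omega
  have hdvd2 : d ∣ 2 := by
    have h1 : 1 ≤ 2 ^ k := Nat.one_le_two_pow
    have := Nat.dvd_sub hd1 hdk
    have heq : 2 ^ k + 1 - (2 ^ k - 1) = 2 := by omega
    rwa [heq] at this
  have : d = 1 ∨ d = 2 := (Nat.dvd_prime Nat.prime_two).1 hdvd2
  rcases this with h | h
  · exact h
  · exact absurd (h ▸ dvd_refl d) hdodd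


open Finset Polynomial

section FieldPart

variable {F : Type*} [Field F] [Fintype F] [DecidableEq F]

lemma sum_shift {M : Type*} [AddCommGroup M] (f : ℕ → M) (N : ℕ) (h : f N = f 0) :
    ∑ i ∈ range N, f (i + 1) = ∑ i ∈ range N, f i := by
  have h2 := Finset.sum_range_succ' f N
  rw [Finset.sum_range_succ f N] at h2
  rw [← h] at h2
  exact (add_right_cancel h2.symm)

lemma card_roots_sum_pow_le (s : Finset ℕ) (j0 : ℕ) (hj0 : j0 ∈ s) (d : ℕ)
    (hd : ∀ j ∈ s, 2 ^ j ≤ 2 ^ d) :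
    (univ.filter fun x : F => ∑ j ∈ s, x ^ (2 ^ j) = 0).card ≤ 2 ^ d := by
  set p : Polynomial F := ∑ j ∈ s, Polynomial.X ^ (2 ^ j) with hp
  have hpne : p ≠ 0 := by
    intro h0
    have hc : p.coeff (2 ^ j0) = 1 := by
      rw [hp, Polynomial.finset_sum_coeff]
      rw [Finset.sum_eq_single j0]
      · simp [Polynomial.coeff_X_pow]
      · intro j hj hne
        rw [Polynomial.coeff_X_pow]
        simp only [ite_eq_right_iff]
        intro hcontra
        exact absurd (Nat.pow_right_injective (le_refl 2) hcontra.symm) hne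
      · intro h; exact absurd hj0 h
    rw [h0] at hc
    simp at hc
  have hsub : (univ.filter fun x : F => ∑ j ∈ s, x ^ (2 ^ j) = 0).val ⊆ p.roots := by
    intro x hx
    simp only [Finset.mem_val, Finset.mem_filter] at hx
    rw [Polynomial.mem_roots hpne]
    rw [hp]
    simp only [Polynomial.IsRoot, Polynomial.eval_finset_sum, Polynomial.eval_pow,
      Polynomial.eval_X]
    exact hx.2
  have h1 := Polynomial.card_le_degree_of_subset_roots hsub
  refine h1.trans ?_
  refine (Polynomial.natDegree_sum_le_of_forall_le s _ fun j hj => ?_)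
  rw [Polynomial.natDegree_X_pow]
  exact hd j hj

end FieldPart


open Finset

section TracePart

variable {F : Type*} [Field F] [Fintype F] [DecidableEq F] [CharP F 2]

/-- absolute trace to `F_2`, viewed in `F` -/
def Tn (n : ℕ) (x : F) : F := ∑ j ∈ range n, x ^ (2 ^ j)

/-- the additive character `(-1)^{Tr(x)}` -/
def chi (n : ℕ) (x : F) : ℤ := if Tn n x = 0 then 1 else -1

variable {n : ℕ} (hcard : Fintype.card F = 2 ^ n)
include hcard

lemma pow_card_self (x : F) : x ^ (2 ^ n) = x := by
  rw [← hcard]; exact FiniteField.pow_card x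

omit hcard in
lemma Tn_add (x y : F) : Tn n (x + y) = Tn n x + Tn n y := by
  simp only [Tn, ← Finset.sum_add_distrib]
  exact Finset.sum_congr rfl fun j _ => add_pow_char_pow ..

lemma Tn_pow_two (x : F) : Tn n (x ^ 2) = Tn n x := by
  have key : ∀ j : ℕ, (x ^ 2) ^ (2 ^ j) = x ^ (2 ^ (j + 1)) := by
    intro j; rw [← pow_mul, ← pow_succ']
  simp only [Tn]
  rw [Finset.sum_congr rfl fun j _ => key j]
  exact sum_shift (fun j => x ^ (2 ^ j)) n (by show x ^ 2 ^ n = x ^ 2 ^ 0; rw [pow_card_self hcard, pow_zero, pow_one])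

lemma Tn_sq (x : F) : (Tn n x) ^ 2 = Tn n x := by
  have h1 : (Tn n x) ^ 2 = Tn n (x ^ 2) := by
    simp only [Tn]
    rw [sum_pow_char]
    exact Finset.sum_congr rfl fun j _ => by rw [← pow_mul, ← pow_mul, mul_comm]
  rw [h1, Tn_pow_two hcard]

lemma Tn_zero_or_one (x : F) : Tn n x = 0 ∨ Tn n x = 1 := by
  have h := Tn_sq hcard x
  have h2 : Tn n x * (Tn n x - 1) = 0 := by linear_combination h
  rcases mul_eq_zero.1 h2 with h | h
  · exact Or.inl h
  · exact Or.inr (by linear_combination h)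

lemma Tn_pow_pow (m : ℕ) (x : F) : Tn n (x ^ (2 ^ m)) = Tn n x := by
  induction m with
  | zero => simp
  | succ m ih =>
    have : x ^ (2 ^ (m + 1)) = (x ^ (2 ^ m)) ^ 2 := by rw [← pow_mul, pow_succ]
    rw [this, Tn_pow_two hcard, ih]

omit hcard in
lemma Tn_zero : Tn n (0 : F) = 0 := by
  simp only [Tn]
  exact Finset.sum_eq_zero fun j _ => zero_pow (pow_ne_zero j two_ne_zero)

omit hcard in
lemma chi_zero : chi n (0 : F) = 1 := by simp [chi, Tn_zero]

lemma chi_add (x y : F) : chi n (x + y) = chi n x * chi n y := by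
  have h2zero : (1 : F) + 1 = 0 := by
    have h := CharP.cast_eq_zero F 2
    rw [← h]; norm_num
  simp only [chi, Tn_add x y]
  rcases Tn_zero_or_one hcard x with h1 | h1 <;> rcases Tn_zero_or_one hcard y with h2 | h2 <;>
      rw [h1, h2] <;> simp [h2zero]

omit hcard in
lemma chi_mul_self (x : F) : chi n x * chi n x = 1 := by
  simp only [chi]; split <;> norm_num

lemma chi_pow_pow (m : ℕ) (x : F) : chi n (x ^ (2 ^ m)) = chi n x := by
  simp only [chi, Tn_pow_pow hcard]

lemma exists_Tn_one (hn : 1 ≤ n) : ∃ x : F, Tn n x = 1 := by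
  by_contra h
  push_neg at h
  have hall : ∀ x : F, Tn n x = 0 := fun x =>
    (Tn_zero_or_one hcard x).resolve_right (h x)
  have hfull : (univ.filter fun x : F => ∑ j ∈ range n, x ^ (2 ^ j) = 0) = univ := by
    apply Finset.filter_true_of_mem
    intro x _
    exact hall x
  have hle := card_roots_sum_pow_le (F := F) (range n) 0 (Finset.mem_range.2 (by omega)) (n - 1)
    (fun j hj => Nat.pow_le_pow_right (by norm_num) (by simp at hj; omega))
  rw [hfull, Finset.card_univ, hcard] at hle
  have : 2 ^ (n - 1) < 2 ^ n := Nat.pow_lt_pow_right (by norm_num) (by omega)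
  omega

lemma sum_chi (hn : 1 ≤ n) (t : F) :
    ∑ x : F, chi n (t * x) = if t = 0 then ((2 : ℤ) ^ n) else 0 := by
  split
  · next ht =>
    subst ht
    simp only [zero_mul, chi_zero]
    rw [Finset.sum_const, Finset.card_univ, hcard]
    push_cast; ring
  · next ht =>
    obtain ⟨x1, hx1⟩ := exists_Tn_one hcard hn
    set x0 := t⁻¹ * x1 with hx0
    set S := ∑ x : F, chi n (t * x) with hS
    have key : S = -S := by
      have h1 : ∑ x : F, chi n (t * (x + x0)) = S := by
        exact Fintype.sum_equiv (Equiv.addRight x0) _ _ (fun x => rfl)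
      have h2 : ∀ x : F, chi n (t * (x + x0)) = chi n (t * x) * chi n (t * x0) := by
        intro x; rw [mul_add, chi_add hcard]
      have h3 : chi n (t * x0) = -1 := by
        have : t * x0 = x1 := by
          rw [hx0, ← mul_assoc, mul_inv_cancel₀ ht, one_mul]
        rw [this]
        simp [chi, hx1]
      calc S = ∑ x : F, chi n (t * (x + x0)) := h1.symm
        _ = ∑ x : F, chi n (t * x) * chi n (t * x0) := Finset.sum_congr rfl fun x _ => h2 x
        _ = -S := by rw [h3]; simp [hS, ← Finset.sum_neg_distrib]
    omega

end TracePart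


open Finset

/-- The relative trace `Tr_e : F → F_{2^e}`, viewed inside `F`. -/
def relTr (n e : ℕ) {F : Type*} [Field F] (x : F) : F :=
  ∑ i ∈ Finset.range (n / e), x ^ (2 ^ (e * i))

section KPart

variable {F : Type*} [Field F] [Fintype F] [DecidableEq F] [CharP F 2]

/-- the subfield with `2^e` elements, as a finset -/
def KK (e : ℕ) (F : Type*) [Field F] [Fintype F] [DecidableEq F] : Finset F :=
  univ.filter fun x => x ^ (2 ^ e) = x

lemma mem_KK {e : ℕ} {x : F} : x ∈ KK e F ↔ x ^ (2 ^ e) = x := by simp [KK]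

lemma KK_zero {e : ℕ} : (0 : F) ∈ KK e F :=
  mem_KK.2 (zero_pow (pow_ne_zero e two_ne_zero))

lemma KK_one {e : ℕ} : (1 : F) ∈ KK e F := mem_KK.2 (one_pow _)

lemma KK_add {e : ℕ} {u v : F} (hu : u ∈ KK e F) (hv : v ∈ KK e F) : u + v ∈ KK e F :=
  mem_KK.2 (by rw [add_pow_char_pow, mem_KK.1 hu, mem_KK.1 hv])

lemma KK_mul {e : ℕ} {u v : F} (hu : u ∈ KK e F) (hv : v ∈ KK e F) : u * v ∈ KK e F :=
  mem_KK.2 (by rw [mul_pow, mem_KK.1 hu, mem_KK.1 hv])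

lemma KK_inv {e : ℕ} {u : F} (hu : u ∈ KK e F) : u⁻¹ ∈ KK e F := by
  rcases eq_or_ne u 0 with h | h
  · simpa [h] using KK_zero
  · exact mem_KK.2 (by rw [inv_pow, mem_KK.1 hu])

lemma KK_pow_mul {e : ℕ} {u : F} (hu : u ∈ KK e F) (m : ℕ) : u ^ (2 ^ (e * m)) = u := by
  induction m with
  | zero => simp
  | succ m ih =>
    have : 2 ^ (e * (m + 1)) = 2 ^ (e * m) * 2 ^ e := by rw [← pow_add, mul_add, mul_one]
    rw [this, pow_mul, ih, mem_KK.1 hu]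

lemma KK_pow_dvd {e m : ℕ} {u : F} (hu : u ∈ KK e F) (hm : e ∣ m) : u ^ (2 ^ m) = u := by
  rcases hm with ⟨l, hl⟩
  rw [hl]; exact KK_pow_mul hu l

lemma relTr_add {n e : ℕ} (x y : F) : relTr n e (x + y) = relTr n e x + relTr n e y := by
  simp only [relTr, ← Finset.sum_add_distrib]
  exact Finset.sum_congr rfl fun i _ => add_pow_char_pow ..

lemma relTr_smul {n e : ℕ} {u : F} (hu : u ∈ KK e F) (x : F) :
    relTr n e (u * x) = u * relTr n e x := by
  simp only [relTr, Finset.mul_sum]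
  exact Finset.sum_congr rfl fun i _ => by rw [mul_pow, KK_pow_mul hu]

lemma sum_range_mul_eq {M : Type*} [AddCommMonoid M] (g : ℕ → M) (a N : ℕ) :
    ∑ j ∈ range (a * N), g j = ∑ m ∈ range N, ∑ i ∈ range a, g (a * m + i) := by
  induction N with
  | zero => simp
  | succ N ih =>
    rw [mul_add, mul_one, Finset.sum_range_add, ih, Finset.sum_range_succ]

variable {n e : ℕ} (hcard : Fintype.card F = 2 ^ n)
include hcard

lemma relTr_mem_KK (hen : e ∣ n) (x : F) : relTr n e x ∈ KK e F := by
  rw [mem_KK]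
  simp only [relTr, sum_pow_char_pow]
  have key : ∀ i : ℕ, (x ^ 2 ^ (e * i)) ^ 2 ^ e = x ^ 2 ^ (e * (i + 1)) := fun i => by
    rw [← pow_mul, ← pow_add, mul_add, mul_one]
  rw [Finset.sum_congr rfl fun i _ => key i]
  refine sum_shift (fun i => x ^ (2 ^ (e * i))) (n / e) ?_
  show x ^ 2 ^ (e * (n / e)) = x ^ 2 ^ (e * 0)
  rw [Nat.mul_div_cancel' hen, pow_card_self hcard]
  simp

omit hcard in
omit [Fintype F] [DecidableEq F] in
lemma relTr_one (hodd : Odd (n / e)) : relTr n e (1 : F) = 1 := by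
  simp only [relTr, one_pow, Finset.sum_const, Finset.card_range, nsmul_eq_mul, mul_one]
  obtain ⟨j, hj⟩ := hodd
  rw [hj]
  push_cast
  have h2 : (2 : F) = 0 := CharP.cast_eq_zero F 2
  rw [h2]; ring

omit hcard in
omit [Fintype F] [DecidableEq F] in
lemma Tn_eq_te_relTr (hen : e ∣ n) (x : F) : Tn n x = Tn e (relTr n e x) := by
  have key : ∀ i : ℕ, (relTr n e x) ^ (2 ^ i) = ∑ m ∈ range (n / e), x ^ (2 ^ (e * m + i)) := by
    intro i
    simp only [relTr, sum_pow_char_pow]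
    exact Finset.sum_congr rfl fun m _ => by rw [← pow_mul, ← pow_add]
  simp only [Tn]
  rw [Finset.sum_congr rfl fun i _ => key i, Finset.sum_comm,
    ← sum_range_mul_eq (fun j => x ^ (2 ^ j)) e (n / e), Nat.mul_div_cancel' hen]

omit hcard in
lemma Tn_e_sq_mem {u : F} (hu : u ∈ KK e F) : (Tn e u) ^ 2 = Tn e u := by
  have h1 : (Tn e u) ^ 2 = ∑ i ∈ range e, u ^ (2 ^ (i + 1)) := by
    simp only [Tn]
    rw [sum_pow_char]
    exact Finset.sum_congr rfl fun i _ => by rw [← pow_mul, ← pow_succ]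
  rw [h1]
  exact sum_shift (fun i => u ^ (2 ^ i)) e (by simpa using mem_KK.1 hu)

omit hcard in
lemma Tn_e_zero_or_one {u : F} (hu : u ∈ KK e F) : Tn e u = 0 ∨ Tn e u = 1 := by
  have h2 : Tn e u * (Tn e u - 1) = 0 := by linear_combination Tn_e_sq_mem hu
  rcases mul_eq_zero.1 h2 with h | h
  · exact Or.inl h
  · exact Or.inr (by linear_combination h)

omit hcard in
lemma card_KK_le (he1 : 1 ≤ e) : (KK e F).card ≤ 2 ^ e := by
  have heq : KK e F = univ.filter fun x : F => ∑ j ∈ ({0, e} : Finset ℕ), x ^ (2 ^ j) = 0 := by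
    ext x
    rw [mem_KK, Finset.mem_filter]
    rw [Finset.sum_pair (by omega : (0 : ℕ) ≠ e)]
    simp only [pow_zero, pow_one, Finset.mem_univ, true_and]
    constructor
    · intro h; rw [h, CharTwo.add_self_eq_zero]
    · intro h
      have h2 : x + (x + x ^ 2 ^ e) = x + 0 := by rw [h]
      rw [← add_assoc, CharTwo.add_self_eq_zero, zero_add, add_zero] at h2
      exact h2
  rw [heq]
  refine card_roots_sum_pow_le _ e (by simp) e (fun j hj => ?_)
  simp only [Finset.mem_insert, Finset.mem_singleton] at hj
  rcases hj with h | h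
  · subst h; exact Nat.one_le_two_pow
  · subst h; exact le_refl _

omit hcard in
lemma card_ker_relTr_le (hen : e ∣ n) (he1 : 1 ≤ e) (hn1 : 1 ≤ n) :
    (univ.filter fun x : F => relTr n e x = 0).card ≤ 2 ^ (n - e) := by
  have hM : 1 ≤ n / e := Nat.one_le_div_iff (by omega) |>.2 (Nat.le_of_dvd (by omega) hen)
  have heq : (univ.filter fun x : F => relTr n e x = 0) =
      univ.filter fun x : F =>
        ∑ j ∈ (range (n / e)).image (fun i => e * i), x ^ (2 ^ j) = 0 := by
    ext x
    simp only [Finset.mem_filter, Finset.mem_univ, true_and]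
    rw [Finset.sum_image (fun a _ b _ h => by
      exact Nat.eq_of_mul_eq_mul_left (by omega) h)]
    rfl
  rw [heq]
  refine card_roots_sum_pow_le _ 0 ?_ (n - e) ?_
  · simp only [Finset.mem_image, Finset.mem_range]
    exact ⟨0, by omega, by ring⟩
  · intro j hj
    simp only [Finset.mem_image, Finset.mem_range] at hj
    obtain ⟨i, hi, rfl⟩ := hj
    refine Nat.pow_le_pow_right (by norm_num) ?_
    have h1 : e * i ≤ e * (n / e - 1) := Nat.mul_le_mul_left e (by omega)
    have h2 : e * (n / e - 1) = n - e := by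
      rw [Nat.mul_sub, mul_one, Nat.mul_div_cancel' hen]
    omega

lemma relTr_image_eq (hen : e ∣ n) (he1 : 1 ≤ e) (hn1 : 1 ≤ n) :
    univ.image (relTr n e) = KK e F ∧ (KK e F).card = 2 ^ e := by
  set I := (univ : Finset F).image (relTr n e) with hI
  have hsub : I ⊆ KK e F := by
    intro y hy
    simp only [hI, Finset.mem_image] at hy
    obtain ⟨x, _, rfl⟩ := hy
    exact relTr_mem_KK hcard hen x
  have hcardI : 2 ^ e ≤ I.card := by
    have hfib := Finset.card_eq_sum_card_fiberwise
      (f := relTr n e) (s := (univ : Finset F)) (t := I)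
      (fun x _ => Finset.mem_image_of_mem _ (Finset.mem_univ x))
    have hbound : ∀ y ∈ I, (univ.filter fun x : F => relTr n e x = y).card ≤ 2 ^ (n - e) := by
      intro y hy
      simp only [hI, Finset.mem_image] at hy
      obtain ⟨x0, _, hx0⟩ := hy
      have hinj : ∀ x ∈ univ.filter fun x : F => relTr n e x = y,
          x + x0 ∈ univ.filter fun x : F => relTr n e x = 0 := by
        intro x hx
        simp only [Finset.mem_filter, Finset.mem_univ, true_and] at hx ⊢
        rw [relTr_add, hx, hx0, CharTwo.add_self_eq_zero]
      have := Finset.card_le_card_of_injOn (fun x => x + x0) hinj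
        (fun a _ b _ h => add_right_cancel (h : a + x0 = b + x0))
      exact this.trans (card_ker_relTr_le hen he1 hn1)
    have hsum : ∑ y ∈ I, (univ.filter fun x : F => relTr n e x = y).card ≤
        I.card * 2 ^ (n - e) := by
      calc ∑ y ∈ I, (univ.filter fun x : F => relTr n e x = y).card
          ≤ ∑ _y ∈ I, 2 ^ (n - e) := Finset.sum_le_sum hbound
        _ = I.card * 2 ^ (n - e) := by rw [Finset.sum_const, smul_eq_mul]
    have h2n : 2 ^ n ≤ I.card * 2 ^ (n - e) := by
      rw [← hcard, ← Finset.card_univ]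
      exact le_trans (le_of_eq hfib) hsum
    by_contra hcon
    push_neg at hcon
    have : I.card * 2 ^ (n - e) < 2 ^ e * 2 ^ (n - e) :=
      (Nat.mul_lt_mul_right (Nat.pow_pos (by norm_num : 0 < 2))).2 hcon
    rw [← pow_add] at this
    have heq : e + (n - e) = n := by
      have := Nat.le_of_dvd (by omega) hen; omega
    rw [heq] at this
    omega
  have hKle := card_KK_le (F := F) he1
  have heq : I = KK e F := Finset.eq_of_subset_of_card_le hsub (hKle.trans hcardI)
  refine ⟨heq, le_antisymm hKle ?_⟩
  rw [← heq]; exact hcardI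

lemma exists_Tn_e_one (hen : e ∣ n) (he1 : 1 ≤ e) (hn1 : 1 ≤ n) :
    ∃ u ∈ KK e F, Tn e u = 1 := by
  obtain ⟨x, hx⟩ := exists_Tn_one hcard hn1
  exact ⟨relTr n e x, relTr_mem_KK hcard hen x, by rw [← Tn_eq_te_relTr hen, hx]⟩

/-- orthogonality over the subfield -/
lemma sum_KK_eps (hen : e ∣ n) (he1 : 1 ≤ e) (hn1 : 1 ≤ n) {s : F} (hs : s ∈ KK e F) :
    ∑ u ∈ KK e F, (if Tn e (u * s) = 0 then (1 : ℤ) else -1) =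
      if s = 0 then (2 : ℤ) ^ e else 0 := by
  split
  · next h =>
    subst h
    simp only [mul_zero, Tn_zero, if_true]
    rw [Finset.sum_const, (relTr_image_eq hcard hen he1 hn1).2, nsmul_eq_mul, mul_one]
    push_cast; ring
  · next h =>
    obtain ⟨u0, hu0K, hu0⟩ := exists_Tn_e_one hcard hen he1 hn1
    set u1 := u0 * s⁻¹ with hu1
    have hu1K : u1 ∈ KK e F := KK_mul hu0K (KK_inv hs)
    set S := ∑ u ∈ KK e F, (if Tn e (u * s) = 0 then (1 : ℤ) else -1) with hS
    have key : S = -S := by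
      have hre : S = ∑ u ∈ KK e F, (if Tn e ((u + u1) * s) = 0 then (1 : ℤ) else -1) := by
        refine Finset.sum_nbij' (fun u => u + u1) (fun u => u + u1) ?_ ?_ ?_ ?_ ?_
        · intro a ha; exact KK_add ha hu1K
        · intro a ha; exact KK_add ha hu1K
        · intro a _
          show a + u1 + u1 = a
          rw [add_assoc, CharTwo.add_self_eq_zero, add_zero]
        · intro a _
          show a + u1 + u1 = a
          rw [add_assoc, CharTwo.add_self_eq_zero, add_zero]
        · intro a _
          congr 2
          show Tn e (a * s) = Tn e ((a + u1 + u1) * s)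
          rw [add_assoc, CharTwo.add_self_eq_zero, add_zero]
      have hterm : ∀ u ∈ KK e F,
          (if Tn e ((u + u1) * s) = 0 then (1 : ℤ) else -1) =
            -(if Tn e (u * s) = 0 then (1 : ℤ) else -1) := by
        intro u huK
        have h1 : (u + u1) * s = u * s + u0 := by
          rw [add_mul, hu1, mul_assoc, inv_mul_cancel₀ h, mul_one]
        have hone : (1 : F) + 1 = 0 := by
          have hh := CharP.cast_eq_zero F 2
          rw [← hh]; norm_num
        rw [h1, Tn_add, hu0]
        rcases Tn_e_zero_or_one (KK_mul huK hs) with h2 | h2 <;> rw [h2] <;> simp [hone]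
      calc S = ∑ u ∈ KK e F, (if Tn e ((u + u1) * s) = 0 then (1 : ℤ) else -1) := hre
        _ = ∑ u ∈ KK e F, -(if Tn e (u * s) = 0 then (1 : ℤ) else -1) :=
          Finset.sum_congr rfl hterm
        _ = -S := by rw [← Finset.sum_neg_distrib]
    omega

end KPart


open Finset

section WeilPart

variable {F : Type*} [Field F] [Fintype F] [DecidableEq F] [CharP F 2]

omit [Fintype F] [DecidableEq F] in
lemma char2_eq_of_add_eq_zero {a b : F} (h : a + b = 0) : a = b := by
  have h2 : a + (b + b) = b := by
    rw [← add_assoc, h, zero_add]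
  rwa [CharTwo.add_self_eq_zero, add_zero] at h2

variable {n k e : ℕ}

/-- units whose order divides two powers-minus-one are fixed by the gcd power -/
lemma mem_KK_of_pow_fix (hcard : Fintype.card F = 2 ^ n) (hn1 : 1 ≤ n) {m : ℕ} (hm : 1 ≤ m)
    {u : F} (hu : u ^ (2 ^ m) = u) : u ^ (2 ^ (Nat.gcd m n)) = u := by
  rcases eq_or_ne u 0 with rfl | h0
  · exact zero_pow (pow_ne_zero _ two_ne_zero)
  have key : ∀ l : ℕ, 1 ≤ l → u ^ (2 ^ l) = u → u ^ (2 ^ l - 1) = 1 := by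
    intro l hl h
    have h1 : (1 : ℕ) ≤ 2 ^ l := Nat.one_le_two_pow
    have h2 : u ^ (2 ^ l - 1) * u = 1 * u := by
      rw [← pow_succ, (by omega : 2 ^ l - 1 + 1 = 2 ^ l), h, one_mul]
    exact mul_right_cancel₀ h0 h2
  set v : Fˣ := Units.mk0 u h0 with hv
  have hvpow : ∀ l : ℕ, u ^ l = 1 → v ^ l = 1 := by
    intro l h
    ext
    rw [Units.val_pow_eq_pow_val]
    simpa [hv] using h
  have h1 : orderOf v ∣ 2 ^ m - 1 :=
    orderOf_dvd_iff_pow_eq_one.2 (hvpow _ (key m hm hu))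
  have h2 : orderOf v ∣ 2 ^ n - 1 := by
    have := orderOf_dvd_card (x := v)
    rwa [Fintype.card_units, hcard] at this
  have h3 : orderOf v ∣ 2 ^ Nat.gcd m n - 1 := dvd_pow_gcd_sub_one h1 h2
  have h4 : v ^ (2 ^ Nat.gcd m n - 1) = 1 := orderOf_dvd_iff_pow_eq_one.1 h3
  have h5 : u ^ (2 ^ Nat.gcd m n - 1) = 1 := by
    have := congrArg Units.val h4
    rwa [Units.val_pow_eq_pow_val] at this
  have h6 : (1 : ℕ) ≤ 2 ^ Nat.gcd m n := Nat.one_le_two_pow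
  calc u ^ 2 ^ Nat.gcd m n = u ^ (2 ^ Nat.gcd m n - 1) * u := by
        rw [← pow_succ, (by omega : 2 ^ Nat.gcd m n - 1 + 1 = 2 ^ Nat.gcd m n)]
    _ = u := by rw [h5, one_mul]

lemma gold_injective (hcard : Fintype.card F = 2 ^ n) (he : e = Nat.gcd k n)
    (hodd : Odd (n / e)) (hk1 : 1 ≤ k) (hkn : k < n) :
    Function.Injective (fun x : F => x ^ (2 ^ k + 1)) := by
  have hcop : Nat.Coprime (2 ^ k + 1) (2 ^ n - 1) := coprime_gold k n e he hodd hk1 hkn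
  intro x y hxy
  simp only at hxy
  rcases eq_or_ne y 0 with rfl | hy0
  · rw [zero_pow (Nat.succ_ne_zero _)] at hxy
    exact pow_eq_zero_iff (Nat.succ_ne_zero _) |>.1 hxy
  rcases eq_or_ne x 0 with rfl | hx0
  · rw [zero_pow (Nat.succ_ne_zero _)] at hxy
    exact absurd (pow_eq_zero_iff (Nat.succ_ne_zero _) |>.1 hxy.symm) hy0
  have hq : (x * y⁻¹) ^ (2 ^ k + 1) = 1 := by
    rw [mul_pow, inv_pow, hxy, mul_inv_cancel₀ (pow_ne_zero _ hy0)]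
  set w : Fˣ := Units.mk0 (x * y⁻¹) (by
    exact mul_ne_zero hx0 (inv_ne_zero hy0)) with hw
  have hw1 : w ^ (2 ^ k + 1) = 1 := by
    ext; rw [Units.val_pow_eq_pow_val]; simpa [hw] using hq
  have h1 : orderOf w ∣ 2 ^ k + 1 := orderOf_dvd_iff_pow_eq_one.2 hw1
  have h2 : orderOf w ∣ 2 ^ n - 1 := by
    have := orderOf_dvd_card (x := w)
    rwa [Fintype.card_units, hcard] at this
  have h3 : orderOf w ∣ 1 := hcop ▸ Nat.dvd_gcd h1 h2
  have hw_eq : w = 1 := orderOf_eq_one_iff.1 (Nat.eq_one_of_dvd_one h3)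
  have : x * y⁻¹ = 1 := by
    have := congrArg Units.val hw_eq
    simpa [hw] using this
  field_simp at this
  exact this

lemma gold_bijective (hcard : Fintype.card F = 2 ^ n) (he : e = Nat.gcd k n)
    (hodd : Odd (n / e)) (hk1 : 1 ≤ k) (hkn : k < n) :
    Function.Bijective (fun x : F => x ^ (2 ^ k + 1)) :=
  ⟨gold_injective hcard he hodd hk1 hkn,
    Finite.surjective_of_injective (gold_injective hcard he hodd hk1 hkn)⟩

/-- the Weil sum of the Gold function -/
def Wsum (n k : ℕ) (A B : F) : ℤ := ∑ x : F, chi n (A * x ^ (2 ^ k + 1) + B * x)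

lemma Wsum_B_zero (hcard : Fintype.card F = 2 ^ n) (he : e = Nat.gcd k n)
    (hodd : Odd (n / e)) (hn : 2 ≤ n) (hk1 : 1 ≤ k) (hkn : k < n) {A : F} (hA : A ≠ 0) :
    Wsum n k A (0 : F) = 0 := by
  have hbij := gold_bijective (e := e) hcard he hodd hk1 hkn
  have h1 : Wsum n k A (0 : F) = ∑ x : F, chi n (A * x ^ (2 ^ k + 1)) := by
    simp [Wsum]
  rw [h1]
  have h2 : ∑ x : F, chi n (A * x ^ (2 ^ k + 1)) = ∑ y : F, chi n (A * y) :=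
    Fintype.sum_bijective _ hbij _ _ (fun x => rfl)
  rw [h2, sum_chi hcard (by omega)]
  simp [hA]

lemma chi_mul_pow_k (hcard : Fintype.card F = 2 ^ n) (hkn : k ≤ n) (a x : F) :
    chi n (a * x ^ (2 ^ k)) = chi n (a ^ (2 ^ (n - k)) * x) := by
  have key : (a * x ^ (2 ^ k)) ^ (2 ^ (n - k)) = a ^ (2 ^ (n - k)) * x := by
    rw [mul_pow, ← pow_mul, ← pow_add, (by omega : k + (n - k) = n), pow_card_self hcard]
  rw [← chi_pow_pow hcard (n - k) (a * x ^ (2 ^ k)), key]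

end WeilPart


open Finset

section WeilSq

variable {F : Type*} [Field F] [Fintype F] [DecidableEq F] [CharP F 2]
variable {n k e : ℕ}

lemma Wsum_sq (hcard : Fintype.card F = 2 ^ n) (he : e = Nat.gcd k n) (hodd : Odd (n / e))
    (hn : 2 ≤ n) (hk1 : 1 ≤ k) (hkn : k < n) {A B : F} (hA : A ≠ 0) (hB : B ≠ 0)
    {γ : F} (hγ : γ ^ (2 ^ k + 1) = A) :
    (Wsum n k A B) ^ 2 = if relTr n e (B * γ⁻¹) = 1 then (2 : ℤ) ^ (n + e) else 0 := by
  have he1 : 1 ≤ e := by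
    rw [he]; exact Nat.gcd_pos_of_pos_left n (by omega)
  have hen : e ∣ n := he ▸ Nat.gcd_dvd_right k n
  have hek : e ∣ k := he ▸ Nat.gcd_dvd_left k n
  have henk : e ∣ n - k := Nat.dvd_sub hen hek
  have hγ0 : γ ≠ 0 := fun h => hA (by rw [← hγ, h, zero_pow (Nat.succ_ne_zero _)])
  have hγk0 : γ ^ (2 ^ k) ≠ 0 := pow_ne_zero _ hγ0
  -- Step 1 : squared double sum
  have hsq : (Wsum n k A B) ^ 2 = ∑ x : F, ∑ w : F,
      chi n ((A * x ^ (2 ^ k + 1) + B * x) + (A * (x + w) ^ (2 ^ k + 1) + B * (x + w))) := by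
    rw [sq, Wsum, Finset.sum_mul_sum]
    refine Finset.sum_congr rfl fun x _ => ?_
    rw [Finset.sum_congr rfl fun z (_ : z ∈ univ) =>
      (chi_add hcard (A * x ^ (2 ^ k + 1) + B * x) (A * z ^ (2 ^ k + 1) + B * z)).symm]
    exact (Fintype.sum_equiv (Equiv.addLeft x) _ _ (fun w => rfl)).symm
  -- Step 2 : char-2 expansion
  have expand : ∀ x w : F, (A * x ^ (2 ^ k + 1) + B * x) + (A * (x + w) ^ (2 ^ k + 1) + B * (x + w))
      = (A * w ^ (2 ^ k + 1) + B * w) + (A * x ^ (2 ^ k) * w + A * w ^ (2 ^ k) * x) := by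
    intro x w
    have h2 : (2 : F) = 0 := by
      have hh := CharP.cast_eq_zero F 2
      rw [← hh]; norm_num
    have e1 : (x + w) ^ (2 ^ k) = x ^ (2 ^ k) + w ^ (2 ^ k) := add_pow_char_pow ..
    simp only [pow_succ]
    rw [e1]
    linear_combination (A * (x ^ (2 ^ k) * x) + B * x) * h2
  -- Step 3 : split the character
  have hsplit : ∀ x w : F,
      chi n ((A * x ^ (2 ^ k + 1) + B * x) + (A * (x + w) ^ (2 ^ k + 1) + B * (x + w)))
      = chi n (A * w ^ (2 ^ k + 1) + B * w) *
          chi n (((A * w) ^ (2 ^ (n - k)) + A * w ^ (2 ^ k)) * x) := by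
    intro x w
    rw [expand x w, chi_add hcard]
    congr 1
    rw [chi_add hcard]
    have h1 : A * x ^ (2 ^ k) * w = (A * w) * x ^ (2 ^ k) := by ring
    rw [h1, chi_mul_pow_k hcard (le_of_lt hkn), ← chi_add hcard]
    congr 1
    ring
  -- Step 4 : inner orthogonality
  have hWsq : (Wsum n k A B) ^ 2 = (2 : ℤ) ^ n *
      ∑ w ∈ univ.filter (fun w : F => (A * w) ^ (2 ^ (n - k)) + A * w ^ (2 ^ k) = 0),
        chi n (A * w ^ (2 ^ k + 1) + B * w) := by
    rw [hsq, Finset.sum_comm]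
    have step : ∀ w : F, ∑ x : F,
        chi n ((A * x ^ (2 ^ k + 1) + B * x) + (A * (x + w) ^ (2 ^ k + 1) + B * (x + w)))
        = (if (A * w) ^ (2 ^ (n - k)) + A * w ^ (2 ^ k) = 0 then
            chi n (A * w ^ (2 ^ k + 1) + B * w) * (2 : ℤ) ^ n else 0) := by
      intro w
      rw [Finset.sum_congr rfl fun x (_ : x ∈ univ) => hsplit x w, ← Finset.mul_sum,
        sum_chi hcard (by omega)]
      split <;> simp
    rw [Finset.sum_congr rfl fun w (_ : w ∈ univ) => step w, ← Finset.sum_filter,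
      Finset.mul_sum]
    exact Finset.sum_congr rfl fun w _ => by ring
  -- Step 5 : the kernel is `γ⁻¹ · K`
  have hker : univ.filter (fun w : F => (A * w) ^ (2 ^ (n - k)) + A * w ^ (2 ^ k) = 0)
      = (KK e F).image (fun u => γ⁻¹ * u) := by
    ext w
    simp only [Finset.mem_filter, Finset.mem_univ, true_and, Finset.mem_image]
    constructor
    · intro hw
      refine ⟨γ * w, ?_, by rw [← mul_assoc, inv_mul_cancel₀ hγ0, one_mul]⟩
      rw [mem_KK]
      have heq : (A * w) ^ (2 ^ (n - k)) = A * w ^ (2 ^ k) := char2_eq_of_add_eq_zero hw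
      have heq2 : ((A * w) ^ (2 ^ (n - k))) ^ (2 ^ k) = (A * w ^ (2 ^ k)) ^ (2 ^ k) := by
        rw [heq]
      rw [← pow_mul, ← pow_add, (by omega : n - k + k = n), pow_card_self hcard] at heq2
      have hr : (A * w ^ (2 ^ k)) ^ (2 ^ k) = A ^ (2 ^ k) * w ^ (2 ^ (2 * k)) := by
        rw [mul_pow, ← pow_mul, ← pow_add, two_mul]
      rw [hr] at heq2
      have hA2 : A ^ (2 ^ k) = γ ^ (2 ^ (2 * k)) * γ ^ (2 ^ k) := by
        rw [← hγ, ← pow_mul, ← pow_add]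
        congr 1
        rw [add_mul, one_mul, two_mul, pow_add]
      have h2k : (γ * w) ^ (2 ^ (2 * k)) = γ * w := by
        rw [mul_pow]
        have hcancel : γ ^ (2 ^ k) * (γ * w) =
            γ ^ (2 ^ k) * (γ ^ (2 ^ (2 * k)) * w ^ (2 ^ (2 * k))) := by
          calc γ ^ (2 ^ k) * (γ * w) = A * w := by rw [← hγ, pow_succ]; ring
            _ = A ^ (2 ^ k) * w ^ (2 ^ (2 * k)) := heq2
            _ = γ ^ (2 ^ k) * (γ ^ (2 ^ (2 * k)) * w ^ (2 ^ (2 * k))) := by rw [hA2]; ring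
        exact (mul_left_cancel₀ hγk0 hcancel).symm
      have hfix := mem_KK_of_pow_fix hcard (by omega) (by omega : 1 ≤ 2 * k) h2k
      rwa [gcd_two_mul k n e he hodd hk1 (by omega)] at hfix
    · rintro ⟨u, huK, rfl⟩
      have h1 : A * (γ⁻¹ * u) = γ ^ (2 ^ k) * u := by
        rw [← hγ, pow_succ, mul_assoc, ← mul_assoc γ γ⁻¹ u, mul_inv_cancel₀ hγ0, one_mul]
      have h2 : (γ ^ (2 ^ k) * u) ^ (2 ^ (n - k)) = γ * u := by
        rw [mul_pow, ← pow_mul, ← pow_add, (by omega : k + (n - k) = n), pow_card_self hcard,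
          KK_pow_dvd huK henk]
      have h3 : A * (γ⁻¹ * u) ^ (2 ^ k) = γ * u := by
        rw [mul_pow, inv_pow, KK_pow_dvd huK hek, ← hγ, pow_succ,
          mul_comm (γ ^ (2 ^ k)) γ, mul_assoc, ← mul_assoc (γ ^ (2 ^ k)),
          mul_inv_cancel₀ hγk0, one_mul]
      rw [h1, h2, h3, CharTwo.add_self_eq_zero]
  -- Step 6 : sum over the image
  have himg : ∑ w ∈ (KK e F).image (fun u => γ⁻¹ * u), chi n (A * w ^ (2 ^ k + 1) + B * w)
      = ∑ u ∈ KK e F, chi n (A * (γ⁻¹ * u) ^ (2 ^ k + 1) + B * (γ⁻¹ * u)) :=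
    Finset.sum_image (fun a _ b _ h => mul_left_cancel₀ (inv_ne_zero hγ0) h)
  -- Step 7 : term simplification on K
  have hterm : ∀ u ∈ KK e F, chi n (A * (γ⁻¹ * u) ^ (2 ^ k + 1) + B * (γ⁻¹ * u))
      = (if Tn e (u * (1 + relTr n e (B * γ⁻¹))) = 0 then (1 : ℤ) else -1) := by
    intro u huK
    have h1 : A * (γ⁻¹ * u) ^ (2 ^ k + 1) = u * u := by
      rw [mul_pow, inv_pow, ← hγ, ← mul_assoc, mul_inv_cancel₀ (pow_ne_zero _ hγ0), one_mul,
        pow_succ, KK_pow_dvd huK hek]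
    have h2 : B * (γ⁻¹ * u) = (B * γ⁻¹) * u := by ring
    rw [h1, h2, chi_add hcard]
    have h3 : chi n (u * u) = chi n u := by
      have huu : u * u = u ^ (2 ^ 1) := by ring
      rw [huu, chi_pow_pow hcard]
    rw [h3, ← chi_add hcard]
    have h4 : u + B * γ⁻¹ * u = (1 + B * γ⁻¹) * u := by ring
    rw [h4]
    show (if Tn n ((1 + B * γ⁻¹) * u) = 0 then (1 : ℤ) else -1) = _
    rw [Tn_eq_te_relTr hen, mul_comm (1 + B * γ⁻¹) u, relTr_smul huK, relTr_add,
      relTr_one hodd]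
  -- Step 8 : conclude
  have hsK : (1 + relTr n e (B * γ⁻¹)) ∈ KK e F :=
    KK_add KK_one (relTr_mem_KK hcard hen _)
  have hKsum := sum_KK_eps hcard hen he1 (by omega) hsK
  have hs0 : (1 + relTr n e (B * γ⁻¹) = 0) ↔ (relTr n e (B * γ⁻¹) = 1) :=
    ⟨fun h => (char2_eq_of_add_eq_zero h).symm, fun h => by rw [h, CharTwo.add_self_eq_zero]⟩
  rw [hWsq, hker, himg, Finset.sum_congr rfl hterm]
  have hKsum' : ∑ u ∈ KK e F, (if Tn e (u * (1 + relTr n e (B * γ⁻¹))) = 0 then (1 : ℤ) else -1)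
      = if 1 + relTr n e (B * γ⁻¹) = 0 then (2 : ℤ) ^ e else 0 := hKsum
  rw [hKsum', if_congr hs0 rfl rfl]
  split
  · rw [← pow_add]
  · ring

end WeilSq


open Finset

section Assemble

variable {F : Type*} [Field F] [Fintype F] [DecidableEq F] [CharP F 2]
variable {n k e : ℕ}

omit [Fintype F] [DecidableEq F] in
lemma char2_eq_iff_add_eq_zero (a b : F) : a = b ↔ a + b = 0 :=
  ⟨fun h => by rw [h, CharTwo.add_self_eq_zero], fun h => char2_eq_of_add_eq_zero h⟩

lemma int_le_of_sq_le_sq {a M : ℤ} (h : a ^ 2 ≤ M ^ 2) (hM : 0 ≤ M) : a ≤ M := by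
  nlinarith [sq_nonneg (a - M), sq_nonneg (a + M)]

lemma Wsum_A_zero (hcard : Fintype.card F = 2 ^ n) (hn : 2 ≤ n) (B : F) :
    Wsum n k (0 : F) B = if B = 0 then (2 : ℤ) ^ n else 0 := by
  rw [Wsum, Finset.sum_congr rfl fun x (_ : x ∈ univ) => by rw [zero_mul, zero_add]]
  exact sum_chi hcard (by omega) B

lemma S_factor (hcard : Fintype.card F = 2 ^ n) (hkn : k ≤ n) (α β : F) :
    ∑ x : F, chi n (α * x ^ (2 ^ k + 1) + β * (x + 1) ^ (2 ^ k + 1))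
      = chi n β * Wsum n k (α + β) (β ^ (2 ^ (n - k)) + β) := by
  have expand : ∀ x : F, α * x ^ (2 ^ k + 1) + β * (x + 1) ^ (2 ^ k + 1)
      = (((α + β) * x ^ (2 ^ k + 1) + β * x) + β * x ^ (2 ^ k)) + β := by
    intro x
    have e1 : (x + 1) ^ (2 ^ k) = x ^ (2 ^ k) + 1 := by
      rw [add_pow_char_pow, one_pow]
    rw [pow_succ (x + 1), e1, pow_succ x]
    ring
  have hpt : ∀ x : F, chi n (α * x ^ (2 ^ k + 1) + β * (x + 1) ^ (2 ^ k + 1))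
      = chi n β * chi n ((α + β) * x ^ (2 ^ k + 1) + (β ^ (2 ^ (n - k)) + β) * x) := by
    intro x
    rw [expand x, chi_add hcard, chi_add hcard, chi_mul_pow_k hcard hkn, ← chi_add hcard]
    have harr : (α + β) * x ^ (2 ^ k + 1) + β * x + β ^ (2 ^ (n - k)) * x
        = (α + β) * x ^ (2 ^ k + 1) + (β ^ (2 ^ (n - k)) + β) * x := by ring
    rw [harr]
    ring
  rw [Finset.sum_congr rfl fun x (_ : x ∈ univ) => hpt x, ← Finset.mul_sum, Wsum]

/-- the summand of the double character sum -/
def termAB (n k : ℕ) (c b α β : F) : ℤ :=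
  chi n (b * (α + β)) *
    ((chi n β * Wsum n k (α + β) (β ^ (2 ^ (n - k)) + β)) *
      (chi n (c⁻¹ * β) * Wsum n k (c * α + c⁻¹ * β) ((c⁻¹ * β) ^ (2 ^ (n - k)) + c⁻¹ * β)))

lemma inner_factor (hcard : Fintype.card F = 2 ^ n) (hkn : k ≤ n) (c b α β : F) :
    ∑ p : F × F, chi n ((p.1 ^ (2 ^ k + 1) + c * p.2 ^ (2 ^ k + 1) + b) * α) *
        chi n (((p.1 + 1) ^ (2 ^ k + 1) + c⁻¹ * (p.2 + 1) ^ (2 ^ k + 1) + b) * β)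
      = termAB n k c b α β := by
  rw [Fintype.sum_prod_type]
  have hpt : ∀ x y : F,
      chi n ((x ^ (2 ^ k + 1) + c * y ^ (2 ^ k + 1) + b) * α) *
        chi n (((x + 1) ^ (2 ^ k + 1) + c⁻¹ * (y + 1) ^ (2 ^ k + 1) + b) * β)
      = chi n (b * (α + β)) *
          (chi n (α * x ^ (2 ^ k + 1) + β * (x + 1) ^ (2 ^ k + 1)) *
            chi n ((c * α) * y ^ (2 ^ k + 1) + (c⁻¹ * β) * (y + 1) ^ (2 ^ k + 1))) := by
    intro x y
    rw [← chi_add hcard, ← chi_add hcard, ← chi_add hcard]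
    congr 1
    ring
  rw [Finset.sum_congr rfl fun x (_ : x ∈ univ) =>
    Finset.sum_congr rfl fun y (_ : y ∈ univ) => hpt x y]
  have hfact : ∑ x : F, ∑ y : F, chi n (b * (α + β)) *
      (chi n (α * x ^ (2 ^ k + 1) + β * (x + 1) ^ (2 ^ k + 1)) *
        chi n ((c * α) * y ^ (2 ^ k + 1) + (c⁻¹ * β) * (y + 1) ^ (2 ^ k + 1)))
      = chi n (b * (α + β)) *
        ((∑ x : F, chi n (α * x ^ (2 ^ k + 1) + β * (x + 1) ^ (2 ^ k + 1))) *
          (∑ y : F, chi n ((c * α) * y ^ (2 ^ k + 1) + (c⁻¹ * β) * (y + 1) ^ (2 ^ k + 1)))) := by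
    rw [Finset.sum_congr rfl fun x (_ : x ∈ univ) => by
      rw [← Finset.mul_sum, ← Finset.mul_sum], ← Finset.mul_sum, ← Finset.sum_mul]
  rw [hfact, S_factor hcard hkn, S_factor hcard hkn, termAB]

end Assemble


open Finset

section MainProof

variable {F : Type*} [Field F] [Fintype F] [DecidableEq F] [CharP F 2]
variable {n k e : ℕ}

lemma gcd_nk_n (hk1 : 1 ≤ k) (hkn : k < n) : Nat.gcd (n - k) n = Nat.gcd k n := by
  have h1 : k + (n - k) = n := by omega
  calc Nat.gcd (n - k) n = Nat.gcd (n - k) (k + (n - k)) := by rw [h1]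
    _ = Nat.gcd (n - k) k := Nat.gcd_add_self_right _ _
    _ = Nat.gcd n k := Nat.gcd_sub_self_left (by omega)
    _ = Nat.gcd k n := Nat.gcd_comm _ _

lemma termAB_cases (hcard : Fintype.card F = 2 ^ n) (he : e = Nat.gcd k n) (hodd : Odd (n / e))
    (hn : 2 ≤ n) (hk1 : 1 ≤ k) (hkn : k < n)
    (c : F) (hc0 : c ≠ 0) (hc1 : c ≠ 1) (hce : c ^ (2 ^ e) = c) (b : F)
    (p : F × F) (hp : p ≠ (0, 0)) :
    termAB n k c b p.1 p.2 = 0 ∨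
      (((p.1 + p.2 ≠ 0 ∧ p.2 ^ (2 ^ (n - k)) + p.2 ≠ 0 ∧
          ∃ γ : F, γ ^ (2 ^ k + 1) = p.1 + p.2 ∧
            relTr n e ((p.2 ^ (2 ^ (n - k)) + p.2) * γ⁻¹) = 1) ∧
        (c * p.1 + c⁻¹ * p.2 ≠ 0 ∧ (c⁻¹ * p.2) ^ (2 ^ (n - k)) + c⁻¹ * p.2 ≠ 0 ∧
          ∃ γ' : F, γ' ^ (2 ^ k + 1) = c * p.1 + c⁻¹ * p.2 ∧
            relTr n e (((c⁻¹ * p.2) ^ (2 ^ (n - k)) + c⁻¹ * p.2) * γ'⁻¹) = 1)) ∧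
        termAB n k c b p.1 p.2 ≤ (2 : ℤ) ^ (n + e)) := by
  have he1 : 1 ≤ e := by rw [he]; exact Nat.gcd_pos_of_pos_left n (by omega)
  have hen : e ∣ n := he ▸ Nat.gcd_dvd_right k n
  have hek : e ∣ k := he ▸ Nat.gcd_dvd_left k n
  have henk : e ∣ n - k := Nat.dvd_sub hen hek
  have hcK : c ∈ KK e F := mem_KK.2 hce
  have hfixK : ∀ {u : F}, u ^ (2 ^ (n - k)) + u = 0 → u ∈ KK e F := by
    intro u hu
    have h1 : u ^ (2 ^ (n - k)) = u := char2_eq_of_add_eq_zero hu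
    have h2 := mem_KK_of_pow_fix hcard (by omega) (by omega : 1 ≤ n - k) h1
    rw [gcd_nk_n hk1 hkn, ← he] at h2
    exact mem_KK.2 h2
  have h2f : (2 : F) = 0 := by
    have hh := CharP.cast_eq_zero F 2
    rw [← hh]; norm_num
  have hcc : c + c⁻¹ ≠ 0 := by
    intro h
    have h1 : c = c⁻¹ := char2_eq_of_add_eq_zero h
    have h2 : c * c = 1 := by nth_rewrite 2 [h1]; exact mul_inv_cancel₀ hc0
    have h3 : (c + 1) * (c + 1) = 0 := by linear_combination h2 + (c + 1) * h2f
    have h4 : c + 1 = 0 := mul_self_eq_zero.1 h3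
    exact hc1 (char2_eq_of_add_eq_zero h4)
  by_cases hA1 : p.1 + p.2 = 0
  · by_cases hB1 : p.2 ^ (2 ^ (n - k)) + p.2 = 0
    · left
      have hβK : p.2 ∈ KK e F := hfixK hB1
      have hβ0 : p.2 ≠ 0 := by
        intro h
        apply hp
        have h1 : p.1 = 0 := by rw [h, add_zero] at hA1; exact hA1
        exact Prod.ext_iff.2 ⟨h1, h⟩
      have hA2eq : c * p.1 + c⁻¹ * p.2 = (c + c⁻¹) * p.2 := by
        have h1 : p.1 = p.2 := char2_eq_of_add_eq_zero hA1
        rw [h1]; ring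
      have hA2ne : c * p.1 + c⁻¹ * p.2 ≠ 0 := by
        rw [hA2eq]; exact mul_ne_zero hcc hβ0
      have hB2 : (c⁻¹ * p.2) ^ (2 ^ (n - k)) + c⁻¹ * p.2 = 0 := by
        have hm : c⁻¹ * p.2 ∈ KK e F := KK_mul (KK_inv hcK) hβK
        rw [KK_pow_dvd hm henk, CharTwo.add_self_eq_zero]
      rw [termAB, hB2, Wsum_B_zero hcard he hodd hn hk1 hkn hA2ne]
      ring
    · left
      rw [termAB, hA1, Wsum_A_zero hcard hn, if_neg hB1]
      ring
  · by_cases hA2 : c * p.1 + c⁻¹ * p.2 = 0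
    · by_cases hB2 : (c⁻¹ * p.2) ^ (2 ^ (n - k)) + c⁻¹ * p.2 = 0
      · left
        have hK2 : c⁻¹ * p.2 ∈ KK e F := hfixK hB2
        have hβK : p.2 ∈ KK e F := by
          have hm := KK_mul hcK hK2
          rwa [← mul_assoc, mul_inv_cancel₀ hc0, one_mul] at hm
        have hαK : p.1 ∈ KK e F := by
          have h1 : c * p.1 = c⁻¹ * p.2 := char2_eq_of_add_eq_zero hA2
          have h2 : p.1 = c⁻¹ * (c⁻¹ * p.2) := by
            rw [← h1, ← mul_assoc, inv_mul_cancel₀ hc0, one_mul]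
          rw [h2]; exact KK_mul (KK_inv hcK) hK2
        have hB1 : p.2 ^ (2 ^ (n - k)) + p.2 = 0 := by
          rw [KK_pow_dvd hβK henk, CharTwo.add_self_eq_zero]
        rw [termAB, hB1, Wsum_B_zero hcard he hodd hn hk1 hkn hA1]
        ring
      · left
        rw [termAB, hA2, Wsum_A_zero hcard hn, if_neg hB2]
        ring
    · by_cases hB1 : p.2 ^ (2 ^ (n - k)) + p.2 = 0
      · left
        rw [termAB, hB1, Wsum_B_zero hcard he hodd hn hk1 hkn hA1]
        ring
      by_cases hB2 : (c⁻¹ * p.2) ^ (2 ^ (n - k)) + c⁻¹ * p.2 = 0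
      · left
        rw [termAB, hB2, Wsum_B_zero hcard he hodd hn hk1 hkn hA2]
        ring
      obtain ⟨γ1, hγ1⟩ := (gold_bijective (e := e) hcard he hodd hk1 hkn).2 (p.1 + p.2)
      obtain ⟨γ2, hγ2⟩ := (gold_bijective (e := e) hcard he hodd hk1 hkn).2
        (c * p.1 + c⁻¹ * p.2)
      have hγ1' : γ1 ^ (2 ^ k + 1) = p.1 + p.2 := hγ1
      have hγ2' : γ2 ^ (2 ^ k + 1) = c * p.1 + c⁻¹ * p.2 := hγ2
      have hW1sq := Wsum_sq hcard he hodd hn hk1 hkn hA1 hB1 hγ1'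
      have hW2sq := Wsum_sq hcard he hodd hn hk1 hkn hA2 hB2 hγ2'
      by_cases htr1 : relTr n e ((p.2 ^ (2 ^ (n - k)) + p.2) * γ1⁻¹) = 1
      · by_cases htr2 : relTr n e (((c⁻¹ * p.2) ^ (2 ^ (n - k)) + c⁻¹ * p.2) * γ2⁻¹) = 1
        · right
          refine ⟨⟨⟨hA1, hB1, γ1, hγ1', htr1⟩, ⟨hA2, hB2, γ2, hγ2', htr2⟩⟩, ?_⟩
          have hW1 : (Wsum n k (p.1 + p.2) (p.2 ^ (2 ^ (n - k)) + p.2)) ^ 2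
              = (2 : ℤ) ^ (n + e) := by rw [hW1sq, if_pos htr1]
          have hW2 : (Wsum n k (c * p.1 + c⁻¹ * p.2)
              ((c⁻¹ * p.2) ^ (2 ^ (n - k)) + c⁻¹ * p.2)) ^ 2
              = (2 : ℤ) ^ (n + e) := by rw [hW2sq, if_pos htr2]
          refine int_le_of_sq_le_sq ?_ (by positivity)
          have hexp : (termAB n k c b p.1 p.2) ^ 2 =
              (chi n (b * (p.1 + p.2)) * chi n (b * (p.1 + p.2))) *
              ((chi n p.2 * chi n p.2) *
              ((chi n (c⁻¹ * p.2) * chi n (c⁻¹ * p.2)) *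
              ((Wsum n k (p.1 + p.2) (p.2 ^ (2 ^ (n - k)) + p.2)) ^ 2 *
               (Wsum n k (c * p.1 + c⁻¹ * p.2)
                 ((c⁻¹ * p.2) ^ (2 ^ (n - k)) + c⁻¹ * p.2)) ^ 2))) := by
            rw [termAB]; ring
          rw [hexp, chi_mul_self, chi_mul_self, chi_mul_self, hW1, hW2]
          rw [one_mul, one_mul, one_mul, sq]
        · left
          have h0 : Wsum n k (c * p.1 + c⁻¹ * p.2)
              ((c⁻¹ * p.2) ^ (2 ^ (n - k)) + c⁻¹ * p.2) = 0 := by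
            have := hW2sq
            rw [if_neg htr2] at this
            exact pow_eq_zero_iff (two_ne_zero) |>.1 this
          rw [termAB, h0]; ring
      · left
        have h0 : Wsum n k (p.1 + p.2) (p.2 ^ (2 ^ (n - k)) + p.2) = 0 := by
          have := hW1sq
          rw [if_neg htr1] at this
          exact pow_eq_zero_iff (two_ne_zero) |>.1 this
        rw [termAB, h0]; ring

end MainProof


open Finset

section FinalTheorem

variable {F' : Type*}

lemma termAB_zero_zero {F : Type*} [Field F] [Fintype F] [DecidableEq F] [CharP F 2]
    {n k : ℕ} (hcard : Fintype.card F = 2 ^ n) (hn : 2 ≤ n) (c b : F) :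
    termAB n k c b 0 0 = (2 : ℤ) ^ n * (2 : ℤ) ^ n := by
  have h0 : ((0 : F)) ^ (2 ^ (n - k)) = 0 := zero_pow (pow_ne_zero _ two_ne_zero)
  rw [termAB]
  simp only [add_zero, mul_zero, zero_add, h0, chi_zero]
  rw [Wsum_A_zero hcard hn, if_pos rfl]
  ring

end FinalTheorem

set_option maxHeartbeats 2000000 in
/-- If `n/e` is odd (`e = gcd(k,n)`) and `c ∈ F_{2^e} \ {0,1}`, then for every `b ≠ 0` the
`c`-BCT entry `N` of the Gold function `x^{2^k+1}` at `(1,b)` satisfies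
`2^n N ≤ 2^n + 2^e |F ∩ F'|`, with the sets `F, F'` as in the paper. -/
theorem gold_cBCT_bound_subfield_c_odd (n k e : ℕ) (hn : 2 ≤ n) (hk1 : 1 ≤ k) (hkn : k < n)
    (he : e = Nat.gcd k n) (hodd : Odd (n / e))
    {F : Type*} [Field F] [Fintype F] [DecidableEq F] [CharP F 2]
    (hcard : Fintype.card F = 2 ^ n)
    (c : F) (hc0 : c ≠ 0) (hc1 : c ≠ 1) (hce : c ^ (2 ^ e) = c) :
    ∀ b : F, b ≠ 0 →
      2 ^ n *
          (Finset.univ.filter fun p : F × F =>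
              p.1 ^ (2 ^ k + 1) + c * p.2 ^ (2 ^ k + 1) = b ∧
              (p.1 + 1) ^ (2 ^ k + 1) + c⁻¹ * (p.2 + 1) ^ (2 ^ k + 1) = b).card ≤
        2 ^ n +
        2 ^ e *
        (Finset.univ.filter fun p : F × F =>
            (p.1 + p.2 ≠ 0 ∧ p.2 ^ (2 ^ (n - k)) + p.2 ≠ 0 ∧
              ∃ γ : F, γ ^ (2 ^ k + 1) = p.1 + p.2 ∧
                relTr n e ((p.2 ^ (2 ^ (n - k)) + p.2) * γ⁻¹) = 1) ∧
            (c * p.1 + c⁻¹ * p.2 ≠ 0 ∧ (c⁻¹ * p.2) ^ (2 ^ (n - k)) + c⁻¹ * p.2 ≠ 0 ∧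
              ∃ γ' : F, γ' ^ (2 ^ k + 1) = c * p.1 + c⁻¹ * p.2 ∧
                relTr n e (((c⁻¹ * p.2) ^ (2 ^ (n - k)) + c⁻¹ * p.2) * γ'⁻¹) = 1)).card := by
  intro b hb
  have hkn' : k ≤ n := le_of_lt hkn
  set NS := (Finset.univ.filter fun p : F × F =>
      p.1 ^ (2 ^ k + 1) + c * p.2 ^ (2 ^ k + 1) = b ∧
      (p.1 + 1) ^ (2 ^ k + 1) + c⁻¹ * (p.2 + 1) ^ (2 ^ k + 1) = b) with hNS
  set GS := (Finset.univ.filter fun p : F × F =>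
      (p.1 + p.2 ≠ 0 ∧ p.2 ^ (2 ^ (n - k)) + p.2 ≠ 0 ∧
        ∃ γ : F, γ ^ (2 ^ k + 1) = p.1 + p.2 ∧
          relTr n e ((p.2 ^ (2 ^ (n - k)) + p.2) * γ⁻¹) = 1) ∧
      (c * p.1 + c⁻¹ * p.2 ≠ 0 ∧ (c⁻¹ * p.2) ^ (2 ^ (n - k)) + c⁻¹ * p.2 ≠ 0 ∧
        ∃ γ' : F, γ' ^ (2 ^ k + 1) = c * p.1 + c⁻¹ * p.2 ∧
          relTr n e (((c⁻¹ * p.2) ^ (2 ^ (n - k)) + c⁻¹ * p.2) * γ'⁻¹) = 1)) with hGS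
  -- the key character-sum identity
  have hident : ((2 : ℤ) ^ n * (2 : ℤ) ^ n) * (NS.card : ℤ)
      = ∑ p : F × F, termAB n k c b p.1 p.2 := by
    calc ((2 : ℤ) ^ n * (2 : ℤ) ^ n) * (NS.card : ℤ)
        = ∑ _p ∈ NS, ((2 : ℤ) ^ n * (2 : ℤ) ^ n) := by
          rw [Finset.sum_const, nsmul_eq_mul]; ring
      _ = ∑ p : F × F, (if p.1 ^ (2 ^ k + 1) + c * p.2 ^ (2 ^ k + 1) = b ∧
            (p.1 + 1) ^ (2 ^ k + 1) + c⁻¹ * (p.2 + 1) ^ (2 ^ k + 1) = b then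
              ((2 : ℤ) ^ n * (2 : ℤ) ^ n) else 0) := by
          rw [hNS, Finset.sum_filter]
      _ = ∑ p : F × F, (∑ α : F, chi n ((p.1 ^ (2 ^ k + 1) + c * p.2 ^ (2 ^ k + 1) + b) * α)) *
            (∑ β : F, chi n (((p.1 + 1) ^ (2 ^ k + 1) + c⁻¹ * (p.2 + 1) ^ (2 ^ k + 1) + b) * β)) := by
          refine Finset.sum_congr rfl fun p _ => ?_
          rw [sum_chi hcard (by omega), sum_chi hcard (by omega)]
          have e1 : (p.1 ^ (2 ^ k + 1) + c * p.2 ^ (2 ^ k + 1) + b = 0) ↔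
              (p.1 ^ (2 ^ k + 1) + c * p.2 ^ (2 ^ k + 1) = b) :=
            (char2_eq_iff_add_eq_zero _ _).symm
          have e2 : ((p.1 + 1) ^ (2 ^ k + 1) + c⁻¹ * (p.2 + 1) ^ (2 ^ k + 1) + b = 0) ↔
              ((p.1 + 1) ^ (2 ^ k + 1) + c⁻¹ * (p.2 + 1) ^ (2 ^ k + 1) = b) :=
            (char2_eq_iff_add_eq_zero _ _).symm
          by_cases h1 : p.1 ^ (2 ^ k + 1) + c * p.2 ^ (2 ^ k + 1) = b <;>
            by_cases h2 : (p.1 + 1) ^ (2 ^ k + 1) + c⁻¹ * (p.2 + 1) ^ (2 ^ k + 1) = b <;>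
            simp [e1, e2, h1, h2, CharTwo.add_self_eq_zero]
      _ = ∑ p : F × F, ∑ α : F, ∑ β : F,
            chi n ((p.1 ^ (2 ^ k + 1) + c * p.2 ^ (2 ^ k + 1) + b) * α) *
            chi n (((p.1 + 1) ^ (2 ^ k + 1) + c⁻¹ * (p.2 + 1) ^ (2 ^ k + 1) + b) * β) := by
          exact Finset.sum_congr rfl fun p _ => Finset.sum_mul_sum _ _ _ _
      _ = ∑ α : F, ∑ p : F × F, ∑ β : F,
            chi n ((p.1 ^ (2 ^ k + 1) + c * p.2 ^ (2 ^ k + 1) + b) * α) *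
            chi n (((p.1 + 1) ^ (2 ^ k + 1) + c⁻¹ * (p.2 + 1) ^ (2 ^ k + 1) + b) * β) :=
          Finset.sum_comm
      _ = ∑ α : F, ∑ β : F, ∑ p : F × F,
            chi n ((p.1 ^ (2 ^ k + 1) + c * p.2 ^ (2 ^ k + 1) + b) * α) *
            chi n (((p.1 + 1) ^ (2 ^ k + 1) + c⁻¹ * (p.2 + 1) ^ (2 ^ k + 1) + b) * β) :=
          Finset.sum_congr rfl fun α _ => Finset.sum_comm
      _ = ∑ α : F, ∑ β : F, termAB n k c b α β :=
          Finset.sum_congr rfl fun α _ => Finset.sum_congr rfl fun β _ =>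
            inner_factor hcard hkn' c b α β
      _ = ∑ p : F × F, termAB n k c b p.1 p.2 := by rw [← Fintype.sum_prod_type']
  -- bound the sum
  have hmain : ((2 : ℤ) ^ n * (2 : ℤ) ^ n) * (NS.card : ℤ)
      ≤ (2 : ℤ) ^ n * (2 : ℤ) ^ n + (2 : ℤ) ^ (n + e) * (GS.card : ℤ) := by
    rw [hident, ← Finset.add_sum_erase univ _ (Finset.mem_univ ((0 : F), (0 : F)))]
    have h00 : termAB n k c b ((0 : F), (0 : F)).1 ((0 : F), (0 : F)).2
        = (2 : ℤ) ^ n * (2 : ℤ) ^ n := termAB_zero_zero hcard hn c b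
    rw [h00]
    refine add_le_add (le_refl _) ?_
    calc ∑ p ∈ univ.erase ((0 : F), (0 : F)), termAB n k c b p.1 p.2
        ≤ ∑ p ∈ univ.erase ((0 : F), (0 : F)),
            (if p ∈ GS then (2 : ℤ) ^ (n + e) else 0) := by
          refine Finset.sum_le_sum fun p hp => ?_
          have hne : p ≠ ((0 : F), (0 : F)) := (Finset.mem_erase.1 hp).1
          rcases termAB_cases hcard he hodd hn hk1 hkn c hc0 hc1 hce b p hne with h | ⟨hmem, hle⟩
          · rw [h]
            split
            · positivity
            · exact le_refl 0
          · rw [if_pos (hGS ▸ Finset.mem_filter.2 ⟨Finset.mem_univ p, hmem⟩)]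
            exact hle
      _ ≤ ∑ p ∈ (univ : Finset (F × F)), (if p ∈ GS then (2 : ℤ) ^ (n + e) else 0) := by
          refine Finset.sum_le_sum_of_subset_of_nonneg (Finset.subset_univ _) fun p _ _ => ?_
          split
          · positivity
          · exact le_refl 0
      _ = (2 : ℤ) ^ (n + e) * (GS.card : ℤ) := by
          rw [Finset.sum_ite_mem, Finset.univ_inter, Finset.sum_const, nsmul_eq_mul]
          ring
  have hfin : (2 : ℤ) ^ n * ((2 : ℤ) ^ n * (NS.card : ℤ))
      ≤ (2 : ℤ) ^ n * ((2 : ℤ) ^ n + (2 : ℤ) ^ e * (GS.card : ℤ)) := by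
    calc (2 : ℤ) ^ n * ((2 : ℤ) ^ n * (NS.card : ℤ))
        = ((2 : ℤ) ^ n * (2 : ℤ) ^ n) * (NS.card : ℤ) := by ring
      _ ≤ (2 : ℤ) ^ n * (2 : ℤ) ^ n + (2 : ℤ) ^ (n + e) * (GS.card : ℤ) := hmain
      _ = (2 : ℤ) ^ n * ((2 : ℤ) ^ n + (2 : ℤ) ^ e * (GS.card : ℤ)) := by
          rw [pow_add]; ring
  have hz := le_of_mul_le_mul_left hfin (by positivity : (0 : ℤ) < 2 ^ n)
  exact_mod_cast hz
end

section
/- Let F : F_q → F_q be any function on the finite field F_q with q = 2^n elements, and let a, b ∈ F_q and c ∈ F_q^*. Then the number of pairs (x, y) ∈ F_q × F_q satisfying F(x) + c·F(y) = b and F(x+a) + c^{−1}·F(y+a) = b equals the number of pairs (x, y) ∈ F_q × F_q satisfying F(x) + c^{−1}·F(y) = b and F(x+a) + c·F(y+a) = b. In other words, in characteristic 2 the c-Boomerang Connectivity Table entry at (a, b) coincides with the c^{−1}-Boomerang Connectivity Table entry at (a, b). -/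
/-- In characteristic 2, the `c`-BCT entry of any function `F` at `(a,b)` coincides with
the `c⁻¹`-BCT entry at `(a,b)`. -/
theorem cBCT_eq_cinvBCT (n : ℕ)
    {K : Type*} [Field K] [Fintype K] [DecidableEq K] [CharP K 2]
    (hcard : Fintype.card K = 2 ^ n)
    (F : K → K) (a b : K) (c : K) (hc : c ≠ 0) :
    (Finset.univ.filter fun p : K × K =>
        F p.1 + c * F p.2 = b ∧ F (p.1 + a) + c⁻¹ * F (p.2 + a) = b).card =
    (Finset.univ.filter fun p : K × K =>
        F p.1 + c⁻¹ * F p.2 = b ∧ F (p.1 + a) + c * F (p.2 + a) = b).card := by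
  have key : ∀ x : K, x + a + a = x := by
    intro x
    have : (a : K) + a = 0 := by
      have := CharP.cast_eq_zero K 2
      push_cast at this
      linear_combination a * this
    rw [add_assoc, this, add_zero]
  apply Finset.card_bij (fun p _ => (p.1 + a, p.2 + a))
  · rintro ⟨x, y⟩ hp
    simp only [Finset.mem_filter, Finset.mem_univ, true_and] at hp ⊢
    rw [key, key]
    exact ⟨hp.2, hp.1⟩
  · rintro ⟨x, y⟩ _ ⟨x', y'⟩ _ h
    simp only [Prod.mk.injEq] at h
    have h1 : x = x' := by
      have := congrArg (· + a) h.1; simpa [key] using this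
    have h2 : y = y' := by
      have := congrArg (· + a) h.2; simpa [key] using this
    simp [h1, h2]
  · rintro ⟨x, y⟩ hp
    refine ⟨(x + a, y + a), ?_, by simp [key]⟩
    simp only [Finset.mem_filter, Finset.mem_univ, true_and] at hp ⊢
    rw [key, key]
    exact ⟨hp.2, hp.1⟩
end
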